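/- For the two-point case: for all real a, b and ρ ∈ [0,1], (a² + ρ²b²)^{1/2} ≤ ((|a-b|^{1+ρ²} + |a+b|^{1+ρ²})/2)^{1/(1+ρ²)}. -/

import Mathlib

open Real Set

private lemma amgm_two {s x y : ℝ} (hs : s ≤ 0) (hx : 0 < x) (hy : 0 < y)
    (hxy : x * y ≤ 1) : 2 ≤ x ^ s + y ^ s := by
  have hxs : 0 < x ^ s := Real.rpow_pos_of_pos hx s
  have hys : 0 < y ^ s := Real.rpow_pos_of_pos hy s
  have hprod : 1 ≤ x ^ s * y ^ s := by
    rw [← Real.mul_rpow hx.le hy.le]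
    exact Real.one_le_rpow_of_pos_of_le_one_of_nonpos (mul_pos hx hy) hxy hs
  nlinarith [sq_nonneg (x ^ s - y ^ s)]

private lemma hasDerivAt_one_add {q x : ℝ} (h : 0 < 1 + x) :
    HasDerivAt (fun t : ℝ => (1 + t) ^ q) (q * (1 + x) ^ (q - 1)) x := by
  have h1 : HasDerivAt (fun t : ℝ => 1 + t) 1 x := (hasDerivAt_id x).const_add 1
  have := (Real.hasDerivAt_rpow_const (p := q) (Or.inl h.ne')).comp x h1
  simpa [Function.comp_def] using this

private lemma hasDerivAt_one_sub {q x : ℝ} (h : 0 < 1 - x) :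
    HasDerivAt (fun t : ℝ => (1 - t) ^ q) (-(q * (1 - x) ^ (q - 1))) x := by
  have h1 : HasDerivAt (fun t : ℝ => 1 - t) (-1) x := (hasDerivAt_id x).const_sub 1
  have := (Real.hasDerivAt_rpow_const (p := q) (Or.inl h.ne')).comp x h1
  simpa [Function.comp_def] using this

private lemma diff_ineq {q : ℝ} (hq0 : 0 ≤ q) (hq1 : q ≤ 1) {ε : ℝ}
    (hε0 : 0 ≤ ε) (hε1 : ε ≤ 1) : 2 * q * ε ≤ (1 + ε) ^ q - (1 - ε) ^ q := by
  set h : ℝ → ℝ := fun t => (1 + t) ^ q - (1 - t) ^ q - 2 * q * t with hh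
  have hcont : ContinuousOn h (Icc 0 1) := by
    apply ContinuousOn.sub
    apply ContinuousOn.sub
    · exact ((Real.continuous_rpow_const hq0).comp (continuous_const.add continuous_id)).continuousOn
    · exact ((Real.continuous_rpow_const hq0).comp (continuous_const.sub continuous_id)).continuousOn
    · exact (continuous_const.mul continuous_id).continuousOn
  have hderiv : ∀ x ∈ interior (Icc (0:ℝ) 1),
      HasDerivAt h (q * (1 + x) ^ (q - 1) + q * (1 - x) ^ (q - 1) - 2 * q) x := by
    intro x hx
    rw [interior_Icc] at hx
    have h1 : 0 < 1 + x := by linarith [hx.1]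
    have h2 : 0 < 1 - x := by linarith [hx.2]
    have d1 := hasDerivAt_one_add (q := q) h1
    have d2 := hasDerivAt_one_sub (q := q) h2
    have d3 : HasDerivAt (fun t : ℝ => 2 * q * t) (2 * q) x := by
      simpa using (hasDerivAt_id x).const_mul (2 * q)
    have := (d1.sub d2).sub d3
    exact this.congr_deriv (by ring)
  have hmono : MonotoneOn h (Icc 0 1) := by
    apply monotoneOn_of_deriv_nonneg (convex_Icc 0 1) hcont
    · intro x hx
      exact ((hderiv x hx).differentiableAt).differentiableWithinAt
    · intro x hx
      rw [(hderiv x hx).deriv]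
      rw [interior_Icc] at hx
      have h1 : 0 < 1 + x := by linarith [hx.1]
      have h2 : 0 < 1 - x := by linarith [hx.2]
      have hxy : (1 + x) * (1 - x) ≤ 1 := by nlinarith [sq_nonneg x]
      have := amgm_two (s := q - 1) (by linarith) h1 h2 hxy
      nlinarith
  have h0 : h 0 = 0 := by simp [hh]
  have := hmono (by simp : (0:ℝ) ∈ Icc (0:ℝ) 1) (by constructor <;> linarith : ε ∈ Icc (0:ℝ) 1) hε0
  rw [h0] at this
  simp only [hh] at this
  linarith

private lemma core_ineq {p : ℝ} (hp1 : 1 ≤ p) (hp2 : p ≤ 2) {ε : ℝ}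
    (hε0 : 0 ≤ ε) (hε1 : ε ≤ 1) :
    2 + p * (p - 1) * ε ^ 2 ≤ (1 - ε) ^ p + (1 + ε) ^ p := by
  have hp0 : (0:ℝ) ≤ p := by linarith
  set g : ℝ → ℝ := fun t => (1 - t) ^ p + (1 + t) ^ p - p * (p - 1) * t ^ 2 with hg
  have hcont : ContinuousOn g (Icc 0 1) := by
    apply ContinuousOn.sub
    apply ContinuousOn.add
    · exact ((Real.continuous_rpow_const hp0).comp (continuous_const.sub continuous_id)).continuousOn
    · exact ((Real.continuous_rpow_const hp0).comp (continuous_const.add continuous_id)).continuousOn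
    · exact (continuous_const.mul (continuous_pow 2)).continuousOn
  have hderiv : ∀ x ∈ interior (Icc (0:ℝ) 1),
      HasDerivAt g (p * (1 + x) ^ (p - 1) - p * (1 - x) ^ (p - 1) - p * (p - 1) * (2 * x)) x := by
    intro x hx
    rw [interior_Icc] at hx
    have h1 : 0 < 1 + x := by linarith [hx.1]
    have h2 : 0 < 1 - x := by linarith [hx.2]
    have d1 := hasDerivAt_one_add (q := p) h1
    have d2 := hasDerivAt_one_sub (q := p) h2
    have d3 : HasDerivAt (fun t : ℝ => p * (p - 1) * t ^ 2) (p * (p - 1) * (2 * x)) x := by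
      simpa using ((hasDerivAt_pow 2 x)).const_mul (p * (p - 1))
    have := (d2.add d1).sub d3
    exact this.congr_deriv (by ring)
  have hmono : MonotoneOn g (Icc 0 1) := by
    apply monotoneOn_of_deriv_nonneg (convex_Icc 0 1) hcont
    · intro x hx
      exact ((hderiv x hx).differentiableAt).differentiableWithinAt
    · intro x hx
      rw [(hderiv x hx).deriv]
      rw [interior_Icc] at hx
      have hd := diff_ineq (q := p - 1) (by linarith) (by linarith)
        (le_of_lt hx.1) (le_of_lt hx.2)
      nlinarith [hd]
  have h0 : g 0 = 2 := by
    norm_num [hg, Real.one_rpow]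
  have := hmono (by simp : (0:ℝ) ∈ Icc (0:ℝ) 1) (by constructor <;> linarith : ε ∈ Icc (0:ℝ) 1) hε0
  rw [h0] at this
  simp only [hg] at this
  linarith

private lemma key_lemma {p : ℝ} (hp1 : 1 ≤ p) (hp2 : p ≤ 2) {a b : ℝ}
    (hb : 0 ≤ b) (hba : b ≤ a) :
    (a ^ 2 + (p - 1) * b ^ 2) ^ (p / 2) ≤ ((a - b) ^ p + (a + b) ^ p) / 2 := by
  have ha : 0 ≤ a := hb.trans hba
  rcases eq_or_lt_of_le ha with h | ha
  · have hb0 : b = 0 := le_antisymm (hba.trans h.symm.le) hb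
    subst hb0
    rw [← h]
    have : (0:ℝ) ^ (p / 2) = 0 := Real.zero_rpow (by positivity)
    simp only [sub_zero, add_zero, mul_zero, ne_eq]
    rw [show (0:ℝ)^2 + (p-1)*0^2 = 0 by ring, this]
    positivity
  · set ε := b / a with hε
    have hε0 : 0 ≤ ε := div_nonneg hb ha.le
    have hε1 : ε ≤ 1 := (div_le_one ha).mpr hba
    have hbe : b = a * ε := by rw [hε]; field_simp
    have hcore := core_ineq hp1 hp2 hε0 hε1
    have hX : a ^ 2 + (p - 1) * b ^ 2 = a ^ 2 * (1 + (p - 1) * ε ^ 2) := by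
      rw [hbe]; ring
    have hposX : (0:ℝ) ≤ 1 + (p - 1) * ε ^ 2 := by nlinarith
    have hap : (0:ℝ) < a ^ p := Real.rpow_pos_of_pos ha p
    -- LHS
    have hL : (a ^ 2 + (p - 1) * b ^ 2) ^ (p / 2)
        = a ^ p * (1 + (p - 1) * ε ^ 2) ^ (p / 2) := by
      rw [hX, Real.mul_rpow (by positivity) hposX]
      congr 1
      rw [← Real.rpow_natCast a 2, ← Real.rpow_mul ha.le]
      congr 1
      push_cast
      ring
    have hBern : (1 + (p - 1) * ε ^ 2) ^ (p / 2) ≤ 1 + p / 2 * ((p - 1) * ε ^ 2) :=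
      rpow_one_add_le_one_add_mul_self (by nlinarith) (by linarith) (by linarith)
    -- RHS
    have hR1 : (a - b) ^ p = a ^ p * (1 - ε) ^ p := by
      rw [hbe, show a - a * ε = a * (1 - ε) by ring,
        Real.mul_rpow ha.le (by nlinarith)]
    have hR2 : (a + b) ^ p = a ^ p * (1 + ε) ^ p := by
      rw [hbe, show a + a * ε = a * (1 + ε) by ring,
        Real.mul_rpow ha.le (by nlinarith)]
    rw [hL, hR1, hR2]
    calc a ^ p * (1 + (p - 1) * ε ^ 2) ^ (p / 2)
        ≤ a ^ p * (1 + p / 2 * ((p - 1) * ε ^ 2)) := by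
          exact mul_le_mul_of_nonneg_left hBern hap.le
      _ ≤ (a ^ p * (1 - ε) ^ p + a ^ p * (1 + ε) ^ p) / 2 := by nlinarith

private lemma key_abs {p : ℝ} (hp1 : 1 ≤ p) (hp2 : p ≤ 2) {a b : ℝ}
    (hab : |b| ≤ |a|) :
    (a ^ 2 + (p - 1) * b ^ 2) ^ (p / 2) ≤ (|a - b| ^ p + |a + b| ^ p) / 2 := by
  have h := key_lemma hp1 hp2 (abs_nonneg b) hab
  rw [sq_abs, sq_abs] at h
  refine h.trans (le_of_eq ?_)
  have key : (|a| - |b|) ^ p + (|a| + |b|) ^ p = |a - b| ^ p + |a + b| ^ p := by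
    rcases le_total 0 a with ha | ha <;> rcases le_total 0 b with hb | hb
    · rw [abs_of_nonneg ha, abs_of_nonneg hb] at *
      rw [abs_of_nonneg (by linarith : (0:ℝ) ≤ a - b), abs_of_nonneg (by linarith : (0:ℝ) ≤ a + b)]
    · rw [abs_of_nonneg ha, abs_of_nonpos hb] at *
      rw [abs_of_nonneg (by linarith : (0:ℝ) ≤ a - b), abs_of_nonneg (by linarith : (0:ℝ) ≤ a + b)]
      rw [show a - -b = a + b by ring, show a + -b = a - b by ring, add_comm]
    · rw [abs_of_nonpos ha, abs_of_nonneg hb] at *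
      rw [abs_of_nonpos (by linarith : a - b ≤ (0:ℝ)), abs_of_nonpos (by linarith : a + b ≤ (0:ℝ))]
      rw [show -a - b = -(a+b) by ring, show -a + b = -(a - b) by ring, add_comm]
    · rw [abs_of_nonpos ha, abs_of_nonpos hb] at *
      rw [abs_of_nonpos (by linarith : a - b ≤ (0:ℝ)), abs_of_nonpos (by linarith : a + b ≤ (0:ℝ))]
      rw [show -a - -b = -(a - b) by ring, show -a + -b = -(a + b) by ring]
  linarith [key]

theorem two_point_hypercontractivity (a b ρ : ℝ) (hρ0 : 0 ≤ ρ) (hρ1 : ρ ≤ 1) :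
    (a ^ 2 + ρ ^ 2 * b ^ 2) ^ ((2 : ℝ)⁻¹)
      ≤ ((|a - b| ^ (1 + ρ ^ 2) + |a + b| ^ (1 + ρ ^ 2)) / 2) ^ ((1 + ρ ^ 2)⁻¹) := by
  set p := 1 + ρ ^ 2 with hp
  have hρ2 : ρ ^ 2 ≤ 1 := by nlinarith
  have hp1 : 1 ≤ p := by nlinarith
  have hp2 : p ≤ 2 := by nlinarith
  have hs : ρ ^ 2 = p - 1 := by ring
  have hX0 : (0:ℝ) ≤ a ^ 2 + ρ ^ 2 * b ^ 2 := by positivity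
  -- main pointwise bound
  have H : (a ^ 2 + ρ ^ 2 * b ^ 2) ^ (p / 2) ≤ (|a - b| ^ p + |a + b| ^ p) / 2 := by
    rcases le_total (|b|) (|a|) with h | h
    · rw [hs]; exact key_abs hp1 hp2 h
    · have h1 : a ^ 2 + ρ ^ 2 * b ^ 2 ≤ b ^ 2 + ρ ^ 2 * a ^ 2 := by
        have : a ^ 2 ≤ b ^ 2 := by
          rw [← sq_abs a, ← sq_abs b]
          exact pow_le_pow_left₀ (abs_nonneg a) h 2
        nlinarith
      have h2 := key_abs hp1 hp2 (a := b) (b := a) h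
      rw [abs_sub_comm b a, show b + a = a + b by ring] at h2
      calc (a ^ 2 + ρ ^ 2 * b ^ 2) ^ (p / 2)
          ≤ (b ^ 2 + (p - 1) * a ^ 2) ^ (p / 2) := by
            apply Real.rpow_le_rpow hX0 (by nlinarith) (by positivity)
        _ ≤ (|a - b| ^ p + |a + b| ^ p) / 2 := h2
  have hR0 : (0:ℝ) ≤ (|a - b| ^ p + |a + b| ^ p) / 2 := by positivity
  have hLHS : (a ^ 2 + ρ ^ 2 * b ^ 2) ^ ((2:ℝ)⁻¹)
      = ((a ^ 2 + ρ ^ 2 * b ^ 2) ^ (p / 2)) ^ (p⁻¹) := by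
    rw [← Real.rpow_mul hX0]
    congr 1
    field_simp
  rw [hLHS]
  exact Real.rpow_le_rpow (Real.rpow_nonneg hX0 _) H (by positivity)
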